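/- Let α₁, α₂, m₁, m₂ > 0 and c ≠ 0. Define the 3×3 matrix A with rows (-α₁/m₁, 0, 0), (1, 0, -1), (0, 0, -α₂/m₂), the column vector B = (0, 0, 1/m₂)ᵀ, and the row vector C = (0, c, 0). Let p₂₂ = |c|α₂ + c²m₂/α₂, p₃₃ = |c|m₂²/α₂, G₂ = 0, G₃ = |c|m₂/α₂, and let p₁₁, G₁ be given by the stated formulas. Then the symmetric matrix P with diagonal (p₁₁,p₂₂,p₃₃) and off-diagonal entries P₁₂ = (α₁/m₁)p₁₁, P₂₃ = -(α₂/m₂)p₃₃, P₁₃ = -((α₁/m₁)p₁₁ + (α₂/m₂)p₃₃)/((α₁/m₁)+(α₂/m₂)) satisfies the algebraic Riccati equation AᵀP + PA - PBBᵀP + CᵀC + GᵀG = 0 with G = (G₁,G₂,G₃). -/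

import Mathlib

open Matrix

set_option maxHeartbeats 8000000

theorem stmt_6 (α₁ α₂ m₁ m₂ c : ℝ)
    (hα₁ : 0 < α₁) (hα₂ : 0 < α₂) (hm₁ : 0 < m₁) (hm₂ : 0 < m₂) (hc : c ≠ 0)
    (A : Matrix (Fin 3) (Fin 3) ℝ) (B : Matrix (Fin 3) (Fin 1) ℝ)
    (C G : Matrix (Fin 1) (Fin 3) ℝ) (P : Matrix (Fin 3) (Fin 3) ℝ)
    (p₁₁ p₂₂ p₃₃ G₁ G₂ G₃ : ℝ)
    (hA : A = !![-(α₁ / m₁), 0, 0; 1, 0, -1; 0, 0, -(α₂ / m₂)])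
    (hB : B = !![0; 0; 1 / m₂])
    (hC : C = !![0, c, 0])
    (hp₁₁ : p₁₁ = (|c| * α₂ + c ^ 2 * m₂ / α₂ -
        c ^ 2 * ((m₁ / α₁) * (m₂ / α₂)) / ((m₁ / α₁) + (m₂ / α₂))) /
        (|c| * α₁ / (α₁ * m₂ + α₂ * m₁) + α₁ ^ 2 / m₁ ^ 2))
    (hp₂₂ : p₂₂ = |c| * α₂ + c ^ 2 * m₂ / α₂)
    (hp₃₃ : p₃₃ = |c| * m₂ ^ 2 / α₂)
    (hG₁ : G₁ = -(α₁ * m₂ * p₁₁ + α₂ * m₁ * p₃₃) / (α₁ * m₂ ^ 2 + α₂ * m₁ * m₂))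
    (hG₂ : G₂ = 0)
    (hG₃ : G₃ = |c| * m₂ / α₂)
    (hG : G = !![G₁, G₂, G₃])
    (hP : P = !![p₁₁, (α₁ / m₁) * p₁₁,
          -((α₁ / m₁) * p₁₁ + (α₂ / m₂) * p₃₃) / ((α₁ / m₁) + (α₂ / m₂));
        (α₁ / m₁) * p₁₁, p₂₂, -(α₂ / m₂) * p₃₃;
        -((α₁ / m₁) * p₁₁ + (α₂ / m₂) * p₃₃) / ((α₁ / m₁) + (α₂ / m₂)),
          -(α₂ / m₂) * p₃₃, p₃₃]) :
    Aᵀ * P + P * A - P * B * Bᵀ * P + Cᵀ * C + Gᵀ * G = 0 := by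
  have hα₁' : α₁ ≠ 0 := ne_of_gt hα₁
  have hα₂' : α₂ ≠ 0 := ne_of_gt hα₂
  have hm₁' : m₁ ≠ 0 := ne_of_gt hm₁
  have hm₂' : m₂ ≠ 0 := ne_of_gt hm₂
  have h1 : α₁ * m₂ + α₂ * m₁ ≠ 0 := by positivity
  have h2 : m₁ / α₁ + m₂ / α₂ ≠ 0 := by positivity
  have h3 : α₁ / m₁ + α₂ / m₂ ≠ 0 := by positivity
  have h4 : α₁ * m₂ ^ 2 + α₂ * m₁ * m₂ ≠ 0 := by positivity
  rcases abs_choice c with h | h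
  · have hcpos : 0 < c := lt_of_le_of_ne (abs_eq_self.mp h) (Ne.symm hc)
    rw [h] at hp₁₁ hp₂₂ hp₃₃ hG₃
    have h5 : c * α₁ / (α₁ * m₂ + α₂ * m₁) + α₁ ^ 2 / m₁ ^ 2 ≠ 0 := by positivity
    subst hA hB hC hG hP
    ext i j
    fin_cases i <;> fin_cases j <;>
      simp [Matrix.mul_apply, Fin.sum_univ_succ, Matrix.vecHead, Matrix.vecTail, Matrix.vecMul, dotProduct] <;>
      (simp only [hG₁, hG₂, hG₃, hp₁₁, hp₂₂, hp₃₃]; field_simp; ring)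
  · have hcneg : c < 0 := lt_of_le_of_ne (abs_eq_neg_self.mp h) hc
    rw [h] at hp₁₁ hp₂₂ hp₃₃ hG₃
    obtain ⟨d, hdpos, hcd⟩ : ∃ d, 0 < d ∧ c = -d := ⟨-c, by linarith, (neg_neg c).symm⟩
    subst hcd
    simp only [neg_neg, neg_sq] at hp₁₁ hp₂₂ hp₃₃ hG₃
    have h5 : d * α₁ / (α₁ * m₂ + α₂ * m₁) + α₁ ^ 2 / m₁ ^ 2 ≠ 0 := by positivity
    subst hA hB hC hG hP
    ext i j
    fin_cases i <;> fin_cases j <;>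
      simp [Matrix.mul_apply, Fin.sum_univ_succ, Matrix.vecHead, Matrix.vecTail, Matrix.vecMul, dotProduct] <;>
      (simp only [hG₁, hG₂, hG₃, hp₁₁, hp₂₂, hp₃₃]; field_simp; ring)
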